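/- For every integer k ≥ 1, the abelianization of the polygonal group Γ(0; 2, 3, 6k) is isomorphic to the cyclic group ℤ/6ℤ. -/

import Mathlib

/-- The relations of the polygonal group
`Γ(0; m₁,…,m_r) = ⟨x₁,…,x_r ∣ x₁^{m₁} = ⋯ = x_r^{m_r} = x₁x₂⋯x_r = 1⟩`. -/
def polygonalRels (r : ℕ) (m : Fin r → ℕ) : Set (FreeGroup (Fin r)) :=
  {w | ∃ i, w = FreeGroup.of i ^ m i} ∪ {(List.ofFn fun i => FreeGroup.of i).prod}

/-- The polygonal group `Γ(0; m₁,…,m_r)`. -/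
abbrev PolygonalGroup (r : ℕ) (m : Fin r → ℕ) : Type :=
  PresentedGroup (polygonalRels r m)

/-- For every `k ≥ 1`, the abelianization of `Γ(0; 2, 3, 6k)` is cyclic of
order `6`. -/
theorem abelianization_polygonal_2_3_6k (k : ℕ) (hk : 1 ≤ k) :
    Nonempty (Abelianization (PolygonalGroup 3 ![2, 3, 6 * k]) ≃*
      Multiplicative (ZMod 6)) := by
  set rels := polygonalRels 3 ![2, 3, 6 * k] with hrels
  -- relations hold in the presented group
  have hrel : ∀ w ∈ rels, PresentedGroup.mk rels w = 1 := fun w hw =>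
    (QuotientGroup.eq_one_iff _).mpr (Subgroup.subset_normalClosure hw)
  set G := Abelianization (PolygonalGroup 3 ![2, 3, 6 * k]) with hG
  set A : G := Abelianization.of (PresentedGroup.of (0 : Fin 3)) with hAdef
  set B : G := Abelianization.of (PresentedGroup.of (1 : Fin 3)) with hBdef
  set C : G := Abelianization.of (PresentedGroup.of (2 : Fin 3)) with hCdef
  have hA : A ^ 2 = 1 := by
    have := hrel _ (Or.inl ⟨0, rfl⟩)
    have h2 := congrArg Abelianization.of this
    simp [Matrix.cons_val_zero] at h2
    exact h2
  have hB : B ^ 3 = 1 := by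
    have := hrel _ (Or.inl ⟨1, rfl⟩)
    have h2 := congrArg Abelianization.of this
    simp at h2
    exact h2
  have hABC : A * B * C = 1 := by
    have := hrel _ (Or.inr rfl)
    have h2 := congrArg Abelianization.of this
    simp [List.ofFn_succ, mul_assoc] at h2
    rw [mul_assoc]
    exact h2
  have hC : C = (A * B)⁻¹ := (inv_eq_of_mul_eq_one_right (by rw [← hABC])).symm
  have hAinv : A⁻¹ = A := inv_eq_of_mul_eq_one_right (by rw [← pow_two, hA])
  have hA3 : A ^ 3 = A := by rw [pow_succ, hA, one_mul]
  have hA6 : A ^ 6 = 1 := by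
    calc A ^ 6 = (A ^ 2) ^ 3 := by rw [← pow_mul]
    _ = 1 := by rw [hA, one_pow]
  have hB6 : B ^ 6 = 1 := by
    calc B ^ 6 = (B ^ 3) ^ 2 := by rw [← pow_mul]
    _ = 1 := by rw [hB, one_pow]
  have hC6 : C ^ 6 = 1 := by rw [hC, inv_pow, mul_pow, hA6, hB6, one_mul, inv_one]
  have hC3 : C ^ 3 = A := by rw [hC, inv_pow, mul_pow, hB, mul_one, hA3, hAinv]
  have hC2 : C ^ 2 = B := by
    rw [hC, inv_pow, mul_pow, hA, one_mul]
    exact inv_eq_of_mul_eq_one_right (by rw [← pow_succ, hB])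
  -- the map to ZMod 6
  set g : Fin 3 → Multiplicative (ZMod 6) :=
    ![Multiplicative.ofAdd 3, Multiplicative.ofAdd 2, Multiplicative.ofAdd 1] with hg
  have h6 : ((6 * k : ℕ) : ZMod 6) = 0 := by
    rw [Nat.cast_mul, show ((6 : ℕ) : ZMod 6) = 0 from rfl, zero_mul]
  have hcond : ∀ w ∈ rels, FreeGroup.lift g w = 1 := by
    rintro w (⟨i, rfl⟩ | rfl)
    · rw [map_pow, FreeGroup.lift_apply_of]
      fin_cases i
      · show Multiplicative.ofAdd (3 : ZMod 6) ^ 2 = 1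
        decide
      · show Multiplicative.ofAdd (2 : ZMod 6) ^ 3 = 1
        decide
      · show Multiplicative.ofAdd (1 : ZMod 6) ^ (6 * k) = 1
        rw [← ofAdd_nsmul]
        simp [nsmul_eq_mul, h6]
    · show FreeGroup.lift g
        (List.ofFn fun i : Fin 3 => FreeGroup.of i).prod = 1
      rw [show (List.ofFn fun i : Fin 3 => FreeGroup.of i) =
        [FreeGroup.of 0, FreeGroup.of 1, FreeGroup.of 2] by
          simp [List.ofFn_succ]]
      simp only [List.prod_cons, List.prod_nil, map_mul, map_one,
        FreeGroup.lift_apply_of, mul_one]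
      show g 0 * (g 1 * g 2) = 1
      decide
  set φ0 : PolygonalGroup 3 ![2, 3, 6 * k] →* Multiplicative (ZMod 6) :=
    PresentedGroup.toGroup hcond with hφ0
  set φ : G →* Multiplicative (ZMod 6) := Abelianization.lift φ0 with hφ
  -- the inverse map
  have hf6 : (zmultiplesHom (Additive G) (Additive.ofMul C)) (6 : ℤ) = 0 := by
    show (6 : ℤ) • Additive.ofMul C = 0
    have : C ^ (6 : ℤ) = 1 := by
      rw [show ((6:ℤ)) = ((6:ℕ):ℤ) from rfl, zpow_natCast, hC6]
    rw [← ofMul_zpow, this]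
    rfl
  set ψ' : ZMod 6 →+ Additive G := ZMod.lift 6 ⟨_, hf6⟩ with hψ'
  set ψ : Multiplicative (ZMod 6) →* G := ψ'.toMultiplicativeLeft with hψ
  have hψ_int : ∀ n : ℤ, ψ (Multiplicative.ofAdd ((n : ℤ) : ZMod 6)) = C ^ n := by
    intro n
    show (ψ' ((n : ℤ) : ZMod 6)).toMul = C ^ n
    rw [hψ', ZMod.lift_coe]
    show (n • Additive.ofMul C).toMul = C ^ n
    rw [← ofMul_zpow]
    rfl
  have hφC : φ C = Multiplicative.ofAdd (1 : ZMod 6) := by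
    rw [hφ, hCdef]
    rw [Abelianization.lift_apply_of]
    exact PresentedGroup.toGroup.of hcond
  have h1 : φ.comp ψ = MonoidHom.id _ := by
    refine MonoidHom.ext fun x => ?_
    obtain ⟨n, hn⟩ := ZMod.intCast_surjective (n := 6) x.toAdd
    have hx : x = Multiplicative.ofAdd ((n : ℤ) : ZMod 6) := by
      rw [hn]; rfl
    rw [MonoidHom.comp_apply, MonoidHom.id_apply, hx, hψ_int, map_zpow, hφC,
      ← ofAdd_zsmul]
    congr 1
    simp
  have h2 : ψ.comp φ = MonoidHom.id _ := by
    apply Abelianization.hom_ext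
    apply PresentedGroup.ext
    intro x
    have key : ∀ x : Fin 3,
        ψ (φ0 (PresentedGroup.of x)) = Abelianization.of (PresentedGroup.of x) := by
      intro x
      rw [hφ0, PresentedGroup.toGroup.of hcond]
      fin_cases x
      · show ψ (Multiplicative.ofAdd (3 : ZMod 6)) = A
        rw [show (3 : ZMod 6) = ((3 : ℤ) : ZMod 6) by decide, hψ_int,
          show ((3:ℤ)) = ((3:ℕ):ℤ) from rfl, zpow_natCast]
        exact hC3
      · show ψ (Multiplicative.ofAdd (2 : ZMod 6)) = B
        rw [show (2 : ZMod 6) = ((2 : ℤ) : ZMod 6) by decide, hψ_int,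
          show ((2:ℤ)) = ((2:ℕ):ℤ) from rfl, zpow_natCast]
        exact hC2
      · show ψ (Multiplicative.ofAdd (1 : ZMod 6)) = C
        rw [show (1 : ZMod 6) = ((1 : ℤ) : ZMod 6) by decide, hψ_int,
          zpow_one]
    simpa [hφ] using key x
  exact ⟨MonoidHom.toMulEquiv φ ψ h2 h1⟩
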